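/- The trajectory likelihood defined via the chain of conditional transition probabilities, p(T) = ∏_{i=2}^{|T|} edgeWeight((v_{i-1}, v_i)) / (Σ_{e : e.p1 = v_{i-1}} edgeWeight(e)), defines a probability distribution on the set of s-to-d paths in a finite DAG: the likelihoods of all paths from s to d sum to 1, provided every vertex reachable from s has positive total outgoing weight or equals d. -/

import Mathlib

open Finset

variable {V : Type*} [Fintype V] [DecidableEq V]

/-- A simple directed path from `s` to `d`, given as its list of edges. -/
def IsSimplePath (s d : V) (T : List (V × V)) : Prop :=
  T ≠ [] ∧ List.Chain' (fun e f => e.2 = f.1) T ∧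
    (T.map Prod.fst).head? = some s ∧ (T.map Prod.snd).getLast? = some d ∧
    (s :: T.map Prod.snd).Nodup

/-- Total weight of positively weighted edges leaving `v`. -/
noncomputable def outSum (w : V × V → ℝ) (v : V) : ℝ :=
  ∑ e ∈ univ.filter (fun e : V × V => e.1 = v ∧ 0 < w e), w e

/-- Trajectory likelihood: product of conditional transition probabilities. -/
noncomputable def pathProb (w : V × V → ℝ) (T : List (V × V)) : ℝ :=
  (T.map (fun e => w e / outSum w e.1)).prod

set_option linter.unusedSectionVars false


lemma isSimplePath_iff (v d : V) (T : List (V × V)) :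
    IsSimplePath v d T ↔ (v ≠ d ∧ T = [(v, d)]) ∨
      ∃ u T', T = (v, u) :: T' ∧ v ∉ u :: T'.map Prod.snd ∧ IsSimplePath u d T' := by
  constructor
  · rintro ⟨hne, hch, hhd, hlast, hnd⟩
    match T, hne with
    | [(a, b)], _ =>
      left
      simp only [List.map_cons, List.map_nil, List.head?_cons, Option.some.injEq,
        List.getLast?_singleton] at hhd hlast
      subst hhd; subst hlast
      simp only [List.map_cons, List.map_nil, List.nodup_cons, List.mem_singleton,
        List.not_mem_nil, not_false_iff, List.nodup_nil, and_true] at hnd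
      exact ⟨hnd, rfl⟩
    | (a, b) :: f :: T'', _ =>
      right
      simp only [List.map_cons, List.head?_cons, Option.some.injEq] at hhd
      subst hhd
      unfold List.Chain' at hch
      rw [List.isChain_cons_cons] at hch
      refine ⟨b, f :: T'', rfl, ?_, ?_, hch.2, ?_, ?_, ?_⟩
      · have h := (List.nodup_cons.mp hnd).1
        simpa using h
      · simp
      · simp [← hch.1]
      · simpa using hlast
      · exact (List.nodup_cons.mp hnd).2
  · rintro (⟨hvd, rfl⟩ | ⟨u, T', rfl, hnotin, hne, hch, hhd, hlast, hnd⟩)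
    · exact ⟨by simp, List.IsChain.singleton _, by simp, by simp, by simp [hvd]⟩
    · refine ⟨by simp, ?_, by simp, ?_, ?_⟩
      · unfold List.Chain'
        rw [List.isChain_cons]
        refine ⟨fun y hy => ?_, hch⟩
        match T', hhd, hy with
        | f :: T'', hhd, hy =>
          simp only [List.map_cons, List.head?_cons, Option.some.injEq] at hhd
          simp only [List.head?_cons, Option.mem_def, Option.some.injEq] at hy
          rw [← hy, hhd]
      · match T', hne, hlast with
        | f :: T'', _, hlast => simpa using hlast
      · simp only [List.map_cons, List.nodup_cons]
        exact ⟨by simpa using hnotin, List.nodup_cons.mp hnd⟩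

lemma not_isSimplePath_self (d : V) (T : List (V × V)) : ¬ IsSimplePath d d T := by
  rintro ⟨-, -, -, hlast, hnd⟩
  exact (List.nodup_cons.mp hnd).1 (List.mem_of_getLast? hlast)

lemma reach_of_mem_snd (w : V × V → ℝ) (d : V) :
    ∀ (T : List (V × V)) (v : V), IsSimplePath v d T → (∀ f ∈ T, 0 < w f) →
      ∀ x ∈ T.map Prod.snd, Relation.TransGen (fun a b => 0 < w (a, b)) v x := by
  intro T
  induction T with
  | nil => intro v hP; exact absurd rfl hP.1
  | cons e T' ih =>
    intro v hP hpos x hx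
    rcases (isSimplePath_iff v d _).mp hP with ⟨hvd, heq⟩ | ⟨u, T'', heq, hnotin, hP'⟩
    · obtain ⟨he, hT⟩ := List.cons.injEq .. ▸ heq
      subst he; subst hT
      simp only [List.map_cons, List.map_nil, List.mem_singleton] at hx
      subst hx
      exact Relation.TransGen.single (hpos (v, x) (by simp))
    · obtain ⟨he, hT⟩ := List.cons.injEq .. ▸ heq
      subst he; subst hT
      simp only [List.map_cons, List.mem_cons] at hx
      rcases hx with rfl | hx
      · exact Relation.TransGen.single (hpos (v, x) (by simp))
      · exact Relation.TransGen.head (hpos (v, u) (by simp))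
          (ih u hP' (fun f hf => hpos f (List.mem_cons_of_mem _ hf)) x hx)

lemma eq_of_map_snd_eq (d : V) :
    ∀ (T₁ : List (V × V)) (v : V) (T₂ : List (V × V)), IsSimplePath v d T₁ → IsSimplePath v d T₂ →
      T₁.map Prod.snd = T₂.map Prod.snd → T₁ = T₂ := by
  intro T₁
  induction T₁ with
  | nil => intro v T₂ h; exact absurd rfl h.1
  | cons e T' ih =>
    intro v T₂ h1 h2 hmap
    rcases (isSimplePath_iff v d _).mp h1 with ⟨hvd, heq⟩ | ⟨u, T'', heq, hnotin, hP'⟩ <;>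
    rcases (isSimplePath_iff v d T₂).mp h2 with ⟨hvd2, heq2⟩ | ⟨u2, T₂', heq2, hnotin2, hP2⟩ <;>
      subst heq2 <;> rw [heq] at hmap ⊢ <;> simp only [List.map_cons, List.map_nil,
        List.cons.injEq] at hmap
    · obtain ⟨rfl, hm⟩ := hmap
      exact absurd (List.map_eq_nil_iff.mp hm.symm) hP2.1
    · exact absurd (List.map_eq_nil_iff.mp hmap.2) hP'.1
    · obtain ⟨rfl, hm⟩ := hmap
      obtain ⟨he, hT⟩ := List.cons.injEq .. ▸ heq
      subst hT
      rw [ih u T₂' hP' hP2 hm]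

noncomputable instance pathFintype (s d : V) (w : V × V → ℝ) :
    Fintype {T : List (V × V) // IsSimplePath s d T ∧ ∀ f ∈ T, 0 < w f} := by
  have hinj : Function.Injective
      (fun T : {T : List (V × V) // IsSimplePath s d T ∧ ∀ f ∈ T, 0 < w f} =>
        (⟨s :: T.1.map Prod.snd, T.2.1.2.2.2.2⟩ : {l : List V // l.Nodup})) := by
    rintro ⟨T₁, h1⟩ ⟨T₂, h2⟩ h
    simp only [Subtype.mk.injEq, List.cons.injEq, true_and] at h
    exact Subtype.ext (eq_of_map_snd_eq d T₁ s T₂ h1.1 h2.1 h)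
  exact Fintype.ofInjective _ hinj

noncomputable def PF (w : V × V → ℝ) (s d : V) : Finset (List (V × V)) :=
  @Set.toFinset _ {T | IsSimplePath s d T ∧ ∀ f ∈ T, 0 < w f} (pathFintype s d w)

lemma mem_PF {w : V × V → ℝ} {s d : V} {T : List (V × V)} :
    T ∈ PF w s d ↔ IsSimplePath s d T ∧ ∀ f ∈ T, 0 < w f := by
  unfold PF
  exact @Set.mem_toFinset _ _ (pathFintype s d w) T

lemma outSum_eq (w : V × V → ℝ) (v : V) :
    outSum w v = ∑ u ∈ univ.filter (fun u => 0 < w (v, u)), w (v, u) := by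
  rw [outSum]
  refine Finset.sum_nbij' (i := fun e : V × V => e.2) (j := fun u => (v, u)) ?_ ?_ ?_ ?_ ?_
  · rintro ⟨a, b⟩ he; simp only [mem_filter, mem_univ, true_and] at he ⊢
    rw [← he.1]; exact he.2
  · intro u hu
    simp only [mem_filter, mem_univ, true_and] at hu
    simp [hu]
  · rintro ⟨a, b⟩ he; simp only [mem_filter, mem_univ, true_and] at he
    rw [he.1]
  · intro u hu; rfl
  · rintro ⟨a, b⟩ he; simp only [mem_filter, mem_univ, true_and] at he
    rw [he.1]

lemma sum_PF_eq_one (w : V × V → ℝ) (d : V)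
    (hacyc : ∀ v : V, ¬ Relation.TransGen (fun a b => 0 < w (a, b)) v v) :
    ∀ v : V, v ≠ d →
      (∀ x : V, x ≠ d → Relation.ReflTransGen (fun a b => 0 < w (a, b)) v x →
        0 < outSum w x) →
      ∑ T ∈ PF w v d, pathProb w T = 1 := by
  have hwf : WellFounded
      (fun a b : V => Relation.TransGen (fun a b : V => 0 < w (a, b)) b a) := by
    haveI : IsTrans V (fun a b : V => Relation.TransGen (fun a b : V => 0 < w (a, b)) b a) :=
      ⟨fun a b c hab hbc => Relation.TransGen.trans hbc hab⟩
    haveI : IsIrrefl V (fun a b : V => Relation.TransGen (fun a b : V => 0 < w (a, b)) b a) :=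
      ⟨fun a h => hacyc a h⟩
    exact Finite.wellFounded_of_trans_of_irrefl _
  intro v
  induction v using hwf.induction with
  | _ v ih =>
  intro hvd hreach
  have houtpos : 0 < outSum w v := hreach v hvd Relation.ReflTransGen.refl
  have hmaps : ∀ T ∈ PF w v d, (T.head?.getD (d, d)).2 ∈
      univ.filter (fun u => 0 < w (v, u)) := by
    intro T hT
    rw [mem_PF] at hT
    rcases (isSimplePath_iff v d T).mp hT.1 with ⟨hvd', rfl⟩ | ⟨u, T', rfl, -, -⟩
    · simpa using hT.2 (v, d) (by simp)
    · simpa using hT.2 (v, u) (by simp)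
  have hfib : ∀ u ∈ univ.filter (fun u => 0 < w (v, u)),
      ∑ T ∈ (PF w v d).filter (fun T => (T.head?.getD (d, d)).2 = u), pathProb w T
        = w (v, u) / outSum w v := by
    intro u hu
    have hu2 : 0 < w (v, u) := (mem_filter.mp hu).2
    by_cases hud : u = d
    · subst hud
      have hone : (PF w v u).filter (fun T => (T.head?.getD (u, u)).2 = u) = {[(v, u)]} := by
        ext T
        simp only [mem_filter, mem_singleton, mem_PF]
        constructor
        · rintro ⟨⟨hP, hpos⟩, htgt⟩
          rcases (isSimplePath_iff v u T).mp hP with ⟨-, rfl⟩ | ⟨u', T', rfl, -, hP'⟩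
          · rfl
          · simp only [List.head?_cons, Option.getD_some] at htgt
            exact absurd (htgt ▸ hP') (not_isSimplePath_self u T')
        · rintro rfl
          have hvu : v ≠ u := fun h => hacyc u (Relation.TransGen.single (h ▸ hu2))
          refine ⟨⟨(isSimplePath_iff v u _).mpr (Or.inl ⟨hvu, rfl⟩), ?_⟩, by simp⟩
          intro f hf
          rw [List.mem_singleton.mp hf]
          exact hu2
      rw [hone, Finset.sum_singleton]
      simp [pathProb, outSum]
    · have himg : (PF w v d).filter (fun T => (T.head?.getD (d, d)).2 = u)
          = (PF w u d).image (fun T => (v, u) :: T) := by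
        ext T
        simp only [mem_filter, mem_image, mem_PF]
        constructor
        · rintro ⟨⟨hP, hpos⟩, htgt⟩
          rcases (isSimplePath_iff v d T).mp hP with ⟨-, rfl⟩ | ⟨u', T', rfl, -, hP'⟩
          · simp only [List.head?_cons, Option.getD_some] at htgt
            exact absurd htgt.symm hud
          · simp only [List.head?_cons, Option.getD_some] at htgt
            subst htgt
            exact ⟨T', ⟨hP', fun f hf => hpos f (List.mem_cons_of_mem _ hf)⟩, rfl⟩
        · rintro ⟨T', ⟨hP', hpos'⟩, rfl⟩
          refine ⟨⟨(isSimplePath_iff v d _).mpr (Or.inr ⟨u, T', rfl, ?_, hP'⟩), ?_⟩, by simp⟩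
          · intro hvm
            rcases List.mem_cons.mp hvm with rfl | hvm'
            · exact hacyc v (Relation.TransGen.single hu2)
            · exact hacyc v (Relation.TransGen.head hu2
                (reach_of_mem_snd w d T' u hP' hpos' v hvm'))
          · intro f hf
            rcases List.mem_cons.mp hf with rfl | hf'
            · exact hu2
            · exact hpos' f hf'
      have hIH : ∑ T ∈ PF w u d, pathProb w T = 1 :=
        ih u (Relation.TransGen.single hu2) hud
          (fun x hxd hx => hreach x hxd (Relation.ReflTransGen.head hu2 hx))
      rw [himg, Finset.sum_image (fun a _ b _ h => by simpa using h)]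
      calc ∑ T ∈ PF w u d, pathProb w ((v, u) :: T)
          = ∑ T ∈ PF w u d, w (v, u) / outSum w v * pathProb w T := by
            refine Finset.sum_congr rfl fun T hT => ?_
            simp [pathProb, outSum]
        _ = w (v, u) / outSum w v := by rw [← Finset.mul_sum, hIH, mul_one]
  calc ∑ T ∈ PF w v d, pathProb w T
      = ∑ u ∈ univ.filter (fun u => 0 < w (v, u)),
          ∑ T ∈ (PF w v d).filter (fun T => (T.head?.getD (d, d)).2 = u), pathProb w T :=
        (Finset.sum_fiberwise_of_maps_to hmaps _).symm
    _ = ∑ u ∈ univ.filter (fun u => 0 < w (v, u)), w (v, u) / outSum w v :=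
        Finset.sum_congr rfl hfib
    _ = 1 := by
        rw [← Finset.sum_div, ← outSum_eq]
        exact div_self (ne_of_gt houtpos)

/-- In a finite DAG with nonnegative weights, where every vertex ≠ d reachable
from s has positive outgoing weight and every positive edge lies on some s-d
path, the trajectory likelihoods of all s-d paths sum to 1. -/
theorem stmt4 (w : V × V → ℝ) (hw : ∀ e, 0 ≤ w e) (s d : V) (hsd : s ≠ d)
    (hacyc : ∀ v : V, ¬ Relation.TransGen (fun a b => 0 < w (a, b)) v v)
    (hout : ∀ v : V, v ≠ d → Relation.ReflTransGen (fun a b => 0 < w (a, b)) s v →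
      0 < outSum w v)
    (honpath : ∀ e : V × V, 0 < w e →
      ∃ T, IsSimplePath s d T ∧ e ∈ T ∧ ∀ f ∈ T, 0 < w f) :
    ∑' T : {T : List (V × V) // IsSimplePath s d T ∧ ∀ f ∈ T, 0 < w f},
      pathProb w T.1 = 1 := by
  haveI := pathFintype s d w
  rw [tsum_fintype]
  rw [← Finset.sum_subtype (PF w s d) (fun T => mem_PF) (pathProb w)]
  exact sum_PF_eq_one w d hacyc s hsd hout
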